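/- Let F be an imaginary quadratic field and λ a unitary Hecke character of F satisfying λ^c = conj(λ) (i.e., λ(conj(x)) = conj(λ(x)) for all ideles x). Then the restriction of λ to the ideles of ℚ equals the trivial character if λ_∞(−1) = 1, and equals the quadratic character ω_{F/ℚ} associated to F/ℚ by class field theory if λ_∞(−1) = −1. -/

import Mathlib

/-- Restriction to `ℚ` of a unitary Hecke character `λ` of an imaginary quadratic field `F`
with `λ^c = conj(λ)`.  The idele class groups of `ℚ` and `F` are abstracted as commutative
groups `AQ`, `AF`, with `j` the natural inclusion, `c` conjugation (fixing the `ℚ`-ideles),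
`Nm` the idelic norm (`j(Nm x) = x·c(x)`), `ω` the quadratic character `ω_{F/ℚ}` of class
field theory (a `±1`-valued character trivial exactly on norms), `ε` the class of the idele
`(−1 at ∞, 1 elsewhere)` — so that `AQ` is generated over the norms by `ε` and
`λ(j ε) = λ_∞(−1)`.  Conclusion: `λ∘j` is trivial if `λ_∞(−1) = 1` and equals `ω_{F/ℚ}` if
`λ_∞(−1) = −1`. -/
theorem stmt6 {AQ AF : Type*} [CommGroup AQ] [CommGroup AF]
    (j : AQ →* AF)
    (c : AF ≃* AF) (hc : ∀ y : AQ, c (j y) = j y)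
    (Nm : AF →* AQ) (hNm : ∀ x : AF, j (Nm x) = x * c x)
    (lam : AF →* ℂˣ) (hunit : ∀ x : AF, ‖(lam x : ℂ)‖ = 1)
    (hconj : ∀ x : AF, (lam (c x) : ℂ) = (starRingEnd ℂ) (lam x))
    (ω : AQ →* ℂˣ) (hω2 : ∀ y : AQ, (ω y : ℂ) = 1 ∨ (ω y : ℂ) = -1)
    (hωnorm : ∀ y : AQ, (ω y : ℂ) = 1 ↔ ∃ x : AF, Nm x = y)
    (ε : AQ) (hεgen : ∀ y : AQ, (∃ x : AF, y = Nm x) ∨ ∃ x : AF, y = ε * Nm x)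
    (linf : ℂ) (hlinf : (lam (j ε) : ℂ) = linf) :
    (linf = 1 → ∀ y : AQ, lam (j y) = 1) ∧
      (linf = -1 → ∀ y : AQ, (lam (j y) : ℂ) = (ω y : ℂ)) := by
  have hnorm1 : ∀ x : AF, (lam (j (Nm x)) : ℂ) = 1 := by
    intro x
    have : (lam (j (Nm x)) : ℂ) = (lam x : ℂ) * (starRingEnd ℂ) (lam x) := by
      rw [hNm, map_mul]
      push_cast
      rw [hconj]
    rw [this, Complex.mul_conj, Complex.normSq_eq_norm_sq]
    have := hunit x
    simp at this ⊢
    simp [this]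
  constructor
  · intro h1 y
    rcases hεgen y with ⟨x, rfl⟩ | ⟨x, rfl⟩
    · exact Units.ext (hnorm1 x)
    · apply Units.ext
      push_cast [map_mul]
      rw [hnorm1 x, hlinf, h1]
      ring
  · intro h1 y
    have hωε : (ω ε : ℂ) = -1 := by
      rcases hω2 ε with h | h
      · exfalso
        obtain ⟨x, hx⟩ := (hωnorm ε).mp h
        have := hnorm1 x
        rw [hx, hlinf, h1] at this
        norm_num at this
      · exact h
    rcases hεgen y with ⟨x, rfl⟩ | ⟨x, rfl⟩
    · rw [hnorm1 x, (hωnorm (Nm x)).mpr ⟨x, rfl⟩]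
    · push_cast [map_mul]
      rw [hnorm1 x, hlinf, h1, hωε, (hωnorm (Nm x)).mpr ⟨x, rfl⟩]
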